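/- Fix D > 0, W > 0, g > 0, N₀ > 0. The energy consumed to transmit D bits at power P, namely E(P) = P·D/(W·log₂(1 + P·g/(W·N₀))), is strictly increasing in P on (0, ∞). -/

import Mathlib

lemma aux_log_ineq {a b : ℝ} (ha : 0 < a) (hab : a < b) :
    a * Real.log (1 + b) < b * Real.log (1 + a) := by
  have hb : 0 < b := ha.trans hab
  have ht0 : 0 < a / b := div_pos ha hb
  have ht1 : a / b < 1 := (div_lt_one hb).2 hab
  have h := strictConcaveOn_log_Ioi.2 (Set.mem_Ioi.2 one_pos)
    (Set.mem_Ioi.2 (by linarith : (0:ℝ) < 1 + b)) (by linarith)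
    (by linarith : (0:ℝ) < 1 - a / b) ht0 (by ring)
  simp only [smul_eq_mul, Real.log_one, mul_zero, zero_add] at h
  have harg : (1 - a / b) * 1 + (a / b) * (1 + b) = 1 + a := by field_simp; ring
  rw [harg] at h
  calc a * Real.log (1 + b) = b * ((a / b) * Real.log (1 + b)) := by
        field_simp
    _ < b * Real.log (1 + a) := (mul_lt_mul_iff_right₀ hb).2 h

/-- The energy `E(P) = P·D/(W·log₂(1 + P·g/(W·N₀)))` needed to transmit `D` bits at
power `P` is strictly increasing on `(0, ∞)`. -/
theorem stmt_4 (D W g N₀ : ℝ) (hD : 0 < D) (hW : 0 < W) (hg : 0 < g) (hN₀ : 0 < N₀) :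
    StrictMonoOn (fun P : ℝ => P * D / (W * Real.logb 2 (1 + P * g / (W * N₀))))
      (Set.Ioi 0) := by
  intro P₁ hP₁ P₂ hP₂ h12
  simp only [Set.mem_Ioi] at hP₁ hP₂
  have hWN : 0 < W * N₀ := mul_pos hW hN₀
  have ha : 0 < P₁ * g / (W * N₀) := div_pos (mul_pos hP₁ hg) hWN
  have hb : 0 < P₂ * g / (W * N₀) := div_pos (mul_pos hP₂ hg) hWN
  have hab : P₁ * g / (W * N₀) < P₂ * g / (W * N₀) := by gcongr
  have key := aux_log_ineq ha hab
  -- key : (P₁*g/(W*N₀)) * log (1 + P₂*g/(W*N₀)) < (P₂*g/(W*N₀)) * log (1 + P₁*g/(W*N₀))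
  have hl2 : 0 < Real.log 2 := Real.log_pos (by norm_num)
  have hL1 : 0 < Real.logb 2 (1 + P₁ * g / (W * N₀)) :=
    Real.logb_pos (by norm_num) (by linarith)
  have hL2 : 0 < Real.logb 2 (1 + P₂ * g / (W * N₀)) :=
    Real.logb_pos (by norm_num) (by linarith)
  have hd1 : 0 < W * Real.logb 2 (1 + P₁ * g / (W * N₀)) := mul_pos hW hL1
  have hd2 : 0 < W * Real.logb 2 (1 + P₂ * g / (W * N₀)) := mul_pos hW hL2
  simp only
  rw [div_lt_div_iff₀ hd1 hd2]
  simp only [Real.logb, div_eq_mul_inv]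
  have hgpos : 0 < g / (W * N₀) := div_pos hg hWN
  have key' : P₁ * Real.log (1 + P₂ * g / (W * N₀)) <
      P₂ * Real.log (1 + P₁ * g / (W * N₀)) := by
    have h := (mul_lt_mul_iff_left₀ (by positivity : (0:ℝ) < W * N₀ / g)).2 key
    calc P₁ * Real.log (1 + P₂ * g / (W * N₀))
        = P₁ * g / (W * N₀) * Real.log (1 + P₂ * g / (W * N₀)) * (W * N₀ / g) := by
          field_simp
      _ < P₂ * g / (W * N₀) * Real.log (1 + P₁ * g / (W * N₀)) * (W * N₀ / g) := h
      _ = P₂ * Real.log (1 + P₁ * g / (W * N₀)) := by field_simp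
  have hfac : 0 < D * W * (Real.log 2)⁻¹ := by positivity
  calc P₁ * D * (W * (Real.log (1 + P₂ * g / (W * N₀)) * (Real.log 2)⁻¹))
      = (D * W * (Real.log 2)⁻¹) * (P₁ * Real.log (1 + P₂ * g / (W * N₀))) := by ring
    _ < (D * W * (Real.log 2)⁻¹) * (P₂ * Real.log (1 + P₁ * g / (W * N₀))) :=
        (mul_lt_mul_iff_right₀ hfac).2 key'
    _ = P₂ * D * (W * (Real.log (1 + P₁ * g / (W * N₀)) * (Real.log 2)⁻¹)) := by ring
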